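/- Let f₀, f₁, ..., fₚ : ℝⁿ → ℝ, 𝒦 = {β ∈ ℝ^{p+1} : β₀ < 0, βᵢ ≤ 0 for i ≥ 1}, ℱ = Im(f₀, -f₁, ..., -fₚ). Suppose (convexHull ℱ) ∩ 𝒦 = ∅ and there exists x₀ with fᵢ(x₀) > 0 for all i = 1,...,p. Then there exist α₁,...,αₚ ≥ 0 such that f₀(x) - Σᵢ αᵢ fᵢ(x) ≥ 0 for all x ∈ ℝⁿ. -/

import Mathlib

theorem coF_inter_K_empty_and_slater_implies_C (n p : ℕ)
    (f0 : (Fin n → ℝ) → ℝ) (f : Fin p → (Fin n → ℝ) → ℝ)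
    (hdisj : (convexHull ℝ {z : Fin (p + 1) → ℝ | ∃ x, z = Fin.cons (f0 x) (fun i => -(f i x))} ∩
      {β : Fin (p + 1) → ℝ | β 0 < 0 ∧ ∀ i : Fin p, β i.succ ≤ 0}) = ∅)
    (hS : ∃ x0 : Fin n → ℝ, ∀ i, 0 < f i x0) :
    ∃ α : Fin p → ℝ, (∀ i, 0 ≤ α i) ∧ ∀ x, 0 ≤ f0 x - ∑ i, α i * f i x := by
  classical
  obtain ⟨x0, hx0⟩ := hS
  set F : Set (Fin (p+1) → ℝ) :=
    {z : Fin (p + 1) → ℝ | ∃ x, z = Fin.cons (f0 x) (fun i => -(f i x))} with hF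
  set U : Set (Fin (p+1) → ℝ) := {β | ∀ i, β i < 0} with hUdef
  have hUopen : IsOpen U := by
    have : U = Set.pi Set.univ (fun _ : Fin (p+1) => Set.Iio (0:ℝ)) := by
      ext β; simp [hUdef, Set.mem_pi]
    rw [this]
    exact isOpen_set_pi Set.finite_univ (fun i _ => isOpen_Iio)
  have hUconv : Convex ℝ U := by
    have : U = Set.pi Set.univ (fun _ : Fin (p+1) => Set.Iio (0:ℝ)) := by
      ext β; simp [hUdef, Set.mem_pi]
    rw [this]
    exact convex_pi (fun i _ => convex_Iio 0)
  have hdisj' : Disjoint U (convexHull ℝ F) := by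
    rw [Set.disjoint_iff]
    rintro β ⟨hβU, hβF⟩
    have : β ∈ (convexHull ℝ F ∩
        {β : Fin (p + 1) → ℝ | β 0 < 0 ∧ ∀ i : Fin p, β i.succ ≤ 0}) :=
      ⟨hβF, hβU 0, fun i => (hβU i.succ).le⟩
    rw [hdisj] at this
    exact this
  obtain ⟨φ, s, hU, hFs⟩ := geometric_hahn_banach_open hUconv hUopen
    (convex_convexHull ℝ F) hdisj'
  -- smul stability of U
  have hsmul : ∀ u ∈ U, ∀ t : ℝ, 0 < t → t • u ∈ U := by
    intro u hu t ht i
    have := hu i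
    simpa using mul_neg_of_pos_of_neg ht this
  -- φ u ≤ 0 for u ∈ U
  have hφU : ∀ u ∈ U, φ u ≤ 0 := by
    intro u hu
    by_contra h
    push_neg at h
    have ht : (0:ℝ) < (|s|+1)/φ u := by positivity
    have := hU _ (hsmul u hu _ ht)
    rw [map_smul] at this
    have : (|s|+1)/φ u * φ u < s := this
    rw [div_mul_cancel₀ _ (ne_of_gt h)] at this
    have := le_abs_self s
    linarith
  -- 0 ≤ s
  have hu0 : (fun _ : Fin (p+1) => (-1:ℝ)) ∈ U := fun i => by norm_num
  have hs0 : 0 ≤ s := by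
    by_contra h
    push_neg at h
    have hφu0 : φ (fun _ => (-1:ℝ)) < s := hU _ hu0
    have hφneg : φ (fun _ => (-1:ℝ)) < 0 := lt_of_lt_of_le hφu0 h.le
    have ht : (0:ℝ) < s / (2 * φ (fun _ => (-1:ℝ))) := div_pos_iff.2 (Or.inr ⟨h, by linarith⟩)
    have := hU _ (hsmul _ hu0 _ ht)
    rw [map_smul] at this
    have h2 : s / (2 * φ (fun _ => (-1:ℝ))) * φ (fun _ => (-1:ℝ)) < s := this
    rw [div_mul_eq_mul_div, mul_comm (2:ℝ), ← div_div,
      mul_div_assoc, div_self (ne_of_lt hφneg)] at h2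
    linarith
  -- coefficients
  set c : Fin (p+1) → ℝ := fun i => φ (fun j => if i = j then (1:ℝ) else 0) with hc
  have hφeq : ∀ β : Fin (p+1) → ℝ, φ β = ∑ i, β i * c i := by
    intro β
    have := LinearMap.pi_apply_eq_sum_univ (φ.toLinearMap) β
    simpa [smul_eq_mul, hc] using this
  have hA : 0 ≤ -φ (fun _ => (-1:ℝ)) := by linarith [hφU _ hu0]
  set A : ℝ := -φ (fun _ => (-1:ℝ)) with hAdef
  have hcnn : ∀ i, 0 ≤ c i := by
    intro i
    have key : ∀ ε : ℝ, 0 < ε → -c i ≤ ε * A := by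
      intro ε hε
      have huε : (fun j => (if i = j then (-1:ℝ) else 0) + ε • (-1:ℝ)) ∈ U := by
        intro j
        by_cases h : i = j <;> simp [h] <;> nlinarith
      have h1 : φ (fun j => (if i = j then (-1:ℝ) else 0) + ε • (-1:ℝ)) ≤ 0 := hφU _ huε
      have hrw : (fun j => (if i = j then (-1:ℝ) else 0) + ε • (-1:ℝ))
          = -(fun j => if i = j then (1:ℝ) else 0) + ε • (fun _ => (-1:ℝ)) := by
        funext j; by_cases h : i = j <;> simp [h]
      rw [hrw, map_add, map_neg, map_smul] at h1
      simp only [smul_eq_mul] at h1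
      have : -c i + ε * (-A) ≤ 0 := by
        rw [hAdef]; rw [hc]; linarith
      linarith
    have : -c i ≤ 0 := by
      by_contra h
      push_neg at h
      rcases eq_or_lt_of_le hA with hA0 | hA0
      · have := key 1 one_pos; rw [← hA0] at this; linarith
      · have hk := key ((-c i)/(2*A)) (by positivity)
        have h2 : (-c i)/(2*A) * A = -c i / 2 := by field_simp
        rw [h2] at hk
        linarith
    linarith
  -- value of φ on F
  have hFval : ∀ x, s ≤ f0 x * c 0 + ∑ i : Fin p, (-(f i x)) * c i.succ := by
    intro x
    have hz : (Fin.cons (f0 x) (fun i => -(f i x)) : Fin (p+1) → ℝ) ∈ convexHull ℝ F :=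
      subset_convexHull ℝ F ⟨x, rfl⟩
    have := hFs _ hz
    rw [hφeq] at this
    rwa [Fin.sum_univ_succ, Fin.cons_zero] at this
    
  -- c 0 > 0 (Slater)
  have hc0 : 0 < c 0 := by
    rcases eq_or_lt_of_le (hcnn 0) with h0 | h0
    · exfalso
      have h1 := hFval x0
      rw [← h0, mul_zero, zero_add] at h1
      have hsum : ∑ i : Fin p, (-(f i x0)) * c i.succ ≤ 0 := by
        apply Finset.sum_nonpos
        intro i _
        have := hx0 i
        have := hcnn i.succ
        nlinarith
      have hseq : s = 0 := le_antisymm (le_trans h1 hsum) hs0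
      -- each term is zero
      have hsum0 : ∑ i : Fin p, (-(f i x0)) * c i.succ = 0 :=
        le_antisymm hsum (hseq ▸ h1)
      have hterm : ∀ i : Fin p, c i.succ = 0 := by
        intro i
        have hall : ∀ j ∈ Finset.univ, (-(f j x0)) * c j.succ = 0 := by
          intro j _
          have hnp : (-(f j x0)) * c j.succ ≤ 0 := by
            have := hx0 j; have := hcnn j.succ; nlinarith
          by_contra hne
          have hlt : (-(f j x0)) * c j.succ < 0 := lt_of_le_of_ne hnp hne
          have : ∑ i : Fin p, (-(f i x0)) * c i.succ < 0 := by
            apply Finset.sum_neg' (fun i _ => by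
              have := hx0 i; have := hcnn i.succ; nlinarith) ⟨j, Finset.mem_univ j, hlt⟩
          linarith
        have := hall i (Finset.mem_univ i)
        have hfi := hx0 i
        by_contra hne
        have hpos : 0 < c i.succ := lt_of_le_of_ne (hcnn i.succ) (Ne.symm hne)
        nlinarith
      have hφ0 : φ (fun _ => (-1:ℝ)) = 0 := by
        rw [hφeq]
        apply Finset.sum_eq_zero
        intro j _
        rcases Fin.eq_zero_or_eq_succ j with rfl | ⟨i, rfl⟩
        · rw [← h0]; ring
        · rw [hterm i]; ring
      have := hU _ hu0
      rw [hφ0, hseq] at this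
      exact lt_irrefl 0 this
    · exact h0
  refine ⟨fun i => c i.succ / c 0, fun i => div_nonneg (hcnn i.succ) hc0.le, fun x => ?_⟩
  have h1 := hFval x
  have key : f0 x - ∑ i, (c i.succ / c 0) * f i x
      = (f0 x * c 0 + ∑ i : Fin p, (-(f i x)) * c i.succ) / c 0 := by
    rw [add_div, Finset.sum_div]
    rw [mul_div_assoc, div_self (ne_of_gt hc0), mul_one, sub_eq_add_neg]
    congr 1
    rw [← Finset.sum_neg_distrib]
    apply Finset.sum_congr rfl
    intro i _
    ring
  rw [key]
  exact div_nonneg (le_trans hs0 h1) hc0.le
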